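/- For α ∈ (0,1), the function F₁(x) = (1-x)²/(1-x^(α+1)) is monotonically decreasing on the interval (0,1). -/

import Mathlib

theorem F1_antitone (α : ℝ) (hα : α ∈ Set.Ioo (0 : ℝ) 1) :
    AntitoneOn (fun x : ℝ => (1 - x) ^ 2 / (1 - x ^ (α + 1))) (Set.Ioo (0 : ℝ) 1) := by
  obtain ⟨hα0, hα1⟩ := hα
  set s := α + 1 with hs
  have hs1 : 1 ≤ s := by simp [hs]; linarith
  have hs2 : s ≤ 2 := by simp [hs]; linarith
  have key : ∀ x ∈ Set.Ioo (0:ℝ) 1, HasDerivAt (fun x : ℝ => (1 - x) ^ 2 / (1 - x ^ s))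
      (((-2*(1-x)) * (1 - x ^ s) - (1-x)^2 * (-(s * x ^ (s-1)))) / (1 - x ^ s)^2) x := by
    intro x hx
    obtain ⟨hx0, hx1⟩ := hx
    have hxs : x ^ s < 1 := Real.rpow_lt_one hx0.le hx1 (by linarith)
    have hne : 1 - x ^ s ≠ 0 := by linarith
    have h1 : HasDerivAt (fun x : ℝ => (1 - x) ^ 2) (-2*(1-x)) x := by
      have := ((hasDerivAt_id x).const_sub 1).fun_pow 2
      simp only [id] at this
      exact this.congr_deriv (by ring)
    have h2 : HasDerivAt (fun x : ℝ => 1 - x ^ s) (-(s * x ^ (s-1))) x := by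
      have := (Real.hasDerivAt_rpow_const (x := x) (p := s) (Or.inr hs1)).const_sub 1
      convert this using 1 <;> ring
    exact h1.div h2 hne
  have h := antitoneOn_of_deriv_nonpos (convex_Ioo (0:ℝ) 1)
    (fun x hx => ((key x hx).differentiableAt.continuousAt).continuousWithinAt)
    (fun x hx => by
      rw [interior_Ioo] at hx
      exact (key x hx).differentiableAt.differentiableWithinAt)
    (fun x hx => by
      rw [interior_Ioo] at hx
      obtain ⟨hx0, hx1⟩ := hx
      rw [(key x ⟨hx0, hx1⟩).deriv]
      have hxs : x ^ s < 1 := Real.rpow_lt_one hx0.le hx1 (by linarith)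
      have hxs0 : (0:ℝ) ≤ x ^ s := Real.rpow_nonneg hx0.le s
      have ha1 : x ^ (s-1) ≤ 1 := Real.rpow_le_one hx0.le hx1.le (by linarith)
      have ha0 : (0:ℝ) ≤ x ^ (s-1) := Real.rpow_nonneg hx0.le _
      have hab : x ^ (s-1) * x = x ^ s := by
        rw [← Real.rpow_add_one (ne_of_gt hx0) (s-1)]; ring_nf
      apply div_nonpos_of_nonpos_of_nonneg _ (sq_nonneg _)
      have h1 : s * x ^ (s-1) * (1-x) ≤ 2 * (1 - x ^ s) := by
        nlinarith [mul_le_mul_of_nonneg_left ha1 (by linarith : (0:ℝ) ≤ s),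
          mul_le_mul_of_nonneg_left hxs.le (by linarith : (0:ℝ) ≤ 2 - s), hab]
      nlinarith [mul_le_mul_of_nonneg_left h1 (by linarith : (0:ℝ) ≤ 1 - x)])
  exact h
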